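/- Let M ∈ ℝ^{n×n} be skew-symmetric and A = I − M. For every nonzero v ∈ ℝⁿ, α(v) = ⟨v,Av⟩/⟨Av,Av⟩ lies in the interval [1/(1 + (m*)²), 1/(1 + m_*²)] ⊆ (0, 1], where m* and m_* are the maximum and minimum moduli of the eigenvalues of M. -/

import Mathlib

open Matrix

/-- Key spectral lemma: any real eigenvalue of `Mᵀ * M` (for skew `M`) is the square of the
modulus of a complex eigenvalue of `M`. -/
lemma key_eig {n : ℕ} (M : Matrix (Fin n) (Fin n) ℝ) (hM : Mᵀ = -M)
    (mstar mlow : ℝ)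
    (hstar_bound : ∀ μ : ℂ,
      Module.End.HasEigenvalue (Matrix.toLin' (M.map (Complex.ofReal))) μ →
        ‖μ‖ ≤ mstar)
    (hlow_bound : ∀ μ : ℂ,
      Module.End.HasEigenvalue (Matrix.toLin' (M.map (Complex.ofReal))) μ →
        mlow ≤ ‖μ‖)
    (hlow0 : 0 ≤ mlow)
    (lam : ℝ) (w : Fin n → ℝ) (hw : w ≠ 0) (hSw : (Mᵀ * M) *ᵥ w = lam • w) :
    mlow ^ 2 ≤ lam ∧ lam ≤ mstar ^ 2 := by
  -- lam is nonnegative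
  have hwpos : 0 < w ⬝ᵥ w := by
    rcases lt_or_eq_of_le (Finset.sum_nonneg fun i _ => mul_self_nonneg (w i)
      : (0:ℝ) ≤ w ⬝ᵥ w) with h | h
    · exact h
    · exact absurd (dotProduct_self_eq_zero.mp h.symm) hw
  have hquad : w ⬝ᵥ ((Mᵀ * M) *ᵥ w) = (M *ᵥ w) ⬝ᵥ (M *ᵥ w) := by
    rw [← Matrix.mulVec_mulVec, Matrix.dotProduct_mulVec, Matrix.vecMul_transpose]
  have hlam0 : 0 ≤ lam := by
    have h1 : w ⬝ᵥ ((Mᵀ * M) *ᵥ w) = lam * (w ⬝ᵥ w) := by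
      rw [hSw, dotProduct_smul, smul_eq_mul]
    have h2 : 0 ≤ (M *ᵥ w) ⬝ᵥ (M *ᵥ w) :=
      Finset.sum_nonneg fun i _ => mul_self_nonneg _
    rw [hquad] at h1
    nlinarith [h1 ▸ h2, hwpos]
  -- complexify
  set Mc : Matrix (Fin n) (Fin n) ℂ := M.map Complex.ofReal with hMc
  set wc : Fin n → ℂ := fun i => (w i : ℂ) with hwcdef
  have hwc : wc ≠ 0 := by
    intro h
    apply hw
    funext i
    have := congrFun h i
    simpa [hwcdef] using this
  have hMMw : (M * M) *ᵥ w = (-lam) • w := by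
    have : ((-M) * M) *ᵥ w = lam • w := by rw [← hM]; exact hSw
    have h2 : -((M * M) *ᵥ w) = lam • w := by
      simpa [Matrix.neg_mul, Matrix.neg_mulVec] using this
    rw [neg_smul, ← h2, neg_neg]
  have hC : (Mc * Mc) *ᵥ wc = ((-lam : ℝ) : ℂ) • wc := by
    funext i
    have hmm : Mc * Mc = (M * M).map Complex.ofRealHom := by
      rw [Matrix.map_mul]; rfl
    rw [hmm]
    have := (Complex.ofRealHom.map_mulVec (M * M) w i).symm
    have hcomp : (Complex.ofRealHom ∘ w) = wc := rfl
    rw [hcomp] at this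
    rw [this]
    have := congrFun hMMw i
    rw [this]
    simp [hwcdef]
  set f : Module.End ℂ (Fin n → ℂ) := Matrix.toLin' Mc with hf
  have hff : (f * f) wc = ((-lam : ℝ) : ℂ) • wc := by
    rw [Module.End.mul_apply, hf, Matrix.toLin'_apply, Matrix.toLin'_apply,
      Matrix.mulVec_mulVec, hC]
  set E : Submodule ℂ (Fin n → ℂ) := Module.End.eigenspace (f * f) ((-lam : ℝ) : ℂ) with hE
  have hwcE : wc ∈ E := Module.End.mem_eigenspace_iff.mpr hff
  have hinv : ∀ x ∈ E, f x ∈ E := by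
    intro x hx
    rw [hE, Module.End.mem_eigenspace_iff] at hx ⊢
    have : (f * f) (f x) = f ((f * f) x) := by
      simp only [Module.End.mul_apply]
    rw [this, hx, _root_.map_smul]
  haveI : Nontrivial E := nontrivial_of_ne ⟨wc, hwcE⟩ 0 (by
    intro h
    exact hwc (congrArg Subtype.val h))
  set g : Module.End ℂ E := f.restrict hinv with hg
  obtain ⟨ν, hν⟩ := Module.End.exists_eigenvalue g
  obtain ⟨u, hu⟩ := hν.exists_hasEigenvector
  have hune : (u : Fin n → ℂ) ≠ 0 := fun h => hu.2 (Subtype.ext h)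
  have hgu : f (u : Fin n → ℂ) = ν • (u : Fin n → ℂ) := by
    have := hu.apply_eq_smul
    have h2 : ((g u : E) : Fin n → ℂ) = ((ν • u : E) : Fin n → ℂ) := by rw [this]
    rw [hg] at h2
    rw [LinearMap.restrict_coe_apply] at h2
    simpa using h2
  have hνeig : Module.End.HasEigenvalue f ν :=
    Module.End.hasEigenvalue_of_hasEigenvector
      ⟨Module.End.mem_eigenspace_iff.mpr hgu, hune⟩
  -- ν ^ 2 = -lam
  have huE : (f * f) (u : Fin n → ℂ) = ((-lam : ℝ) : ℂ) • (u : Fin n → ℂ) :=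
    Module.End.mem_eigenspace_iff.mp u.2
  have h1 : (f * f) (u : Fin n → ℂ) = (ν ^ 2) • (u : Fin n → ℂ) := by
    rw [Module.End.mul_apply, hgu, _root_.map_smul, hgu, smul_smul, pow_two]
  have hsq : (ν ^ 2) • (u : Fin n → ℂ) = ((-lam : ℝ) : ℂ) • (u : Fin n → ℂ) :=
    h1.symm.trans huE
  have hν2 : ν ^ 2 = ((-lam : ℝ) : ℂ) := by
    have := sub_eq_zero.mpr hsq
    rw [← sub_smul] at this
    rcases smul_eq_zero.mp this with h | h
    · exact sub_eq_zero.mp h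
    · exact absurd h hune
  have habs : ‖ν‖ ^ 2 = lam := by
    have : ‖ν ^ 2‖ = ‖((-lam : ℝ) : ℂ)‖ := by rw [hν2]
    rw [norm_pow, Complex.norm_real, Real.norm_eq_abs, abs_of_nonpos (by linarith)] at this
    simpa using this
  constructor
  · have := hlow_bound ν hνeig
    nlinarith [norm_nonneg ν]
  · have := hstar_bound ν hνeig
    nlinarith [norm_nonneg ν]

theorem stmt14 {n : ℕ} (M : Matrix (Fin n) (Fin n) ℝ) (hM : Mᵀ = -M)
    (A : Matrix (Fin n) (Fin n) ℝ) (hA : A = 1 - M)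
    (mstar mlow : ℝ)
    (hstar_bound : ∀ μ : ℂ,
      Module.End.HasEigenvalue (Matrix.toLin' (M.map (Complex.ofReal))) μ →
        ‖μ‖ ≤ mstar)
    (hstar_mem : ∃ μ : ℂ,
      Module.End.HasEigenvalue (Matrix.toLin' (M.map (Complex.ofReal))) μ ∧
        ‖μ‖ = mstar)
    (hlow_bound : ∀ μ : ℂ,
      Module.End.HasEigenvalue (Matrix.toLin' (M.map (Complex.ofReal))) μ →
        mlow ≤ ‖μ‖)
    (hlow_mem : ∃ μ : ℂ,
      Module.End.HasEigenvalue (Matrix.toLin' (M.map (Complex.ofReal))) μ ∧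
        ‖μ‖ = mlow)
    (v : Fin n → ℝ) (hv : v ≠ 0) :
    v ⬝ᵥ A.mulVec v / (A.mulVec v ⬝ᵥ A.mulVec v) ∈
      Set.Icc (1 / (1 + mstar ^ 2)) (1 / (1 + mlow ^ 2)) ∧
    Set.Icc (1 / (1 + mstar ^ 2)) (1 / (1 + mlow ^ 2)) ⊆ Set.Ioc (0 : ℝ) 1 := by
  have hlow0 : 0 ≤ mlow := by
    obtain ⟨μ, _, hμ⟩ := hlow_mem
    rw [← hμ]; exact norm_nonneg μ
  set S : Matrix (Fin n) (Fin n) ℝ := Mᵀ * M with hSdef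
  have hSherm : S.IsHermitian := by
    have := Matrix.isHermitian_conjTranspose_mul_self M
    rwa [Matrix.conjTranspose_eq_transpose_of_trivial] at this
  -- Rayleigh bounds via positive semidefiniteness
  have key := key_eig M hM mstar mlow hstar_bound hlow_bound hlow0
  have hsm : ∀ a : ℝ, (a • (1 : Matrix (Fin n) (Fin n) ℝ)).IsHermitian := by
    intro a
    show _ = _
    ext i j
    simp [Matrix.conjTranspose_apply, Matrix.one_apply]
    by_cases h : i = j <;> simp [h]
    exact fun h2 => absurd h2.symm h
  have hT1 : (mstar ^ 2 • (1 : Matrix (Fin n) (Fin n) ℝ) - S).IsHermitian :=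
    (hsm _).sub hSherm
  have hT2 : (S - mlow ^ 2 • (1 : Matrix (Fin n) (Fin n) ℝ)).IsHermitian :=
    hSherm.sub (hsm _)
  have hT1psd : (mstar ^ 2 • (1 : Matrix (Fin n) (Fin n) ℝ) - S).PosSemidef := by
    apply hT1.posSemidef_iff_eigenvalues_nonneg.mpr
    intro i
    rw [Pi.zero_apply]
    set ℓ := hT1.eigenvalues i with hℓ
    have hmv := hT1.mulVec_eigenvectorBasis i
    have hwne : ⇑(hT1.eigenvectorBasis i) ≠ 0 := by
      have := hT1.eigenvectorBasis.orthonormal.ne_zero i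
      intro h
      exact this (by ext j; exact congrFun h j)
    have hSv : S *ᵥ ⇑(hT1.eigenvectorBasis i) = (mstar ^ 2 - ℓ) • ⇑(hT1.eigenvectorBasis i) := by
      have hexp : (mstar ^ 2 • (1 : Matrix (Fin n) (Fin n) ℝ) - S) *ᵥ ⇑(hT1.eigenvectorBasis i)
          = mstar ^ 2 • ⇑(hT1.eigenvectorBasis i) - S *ᵥ ⇑(hT1.eigenvectorBasis i) := by
        rw [Matrix.sub_mulVec, Matrix.smul_mulVec, Matrix.one_mulVec]
      rw [hexp] at hmv
      rw [sub_smul]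
      rw [← hmv]
      abel
    have := (key (mstar ^ 2 - ℓ) _ hwne hSv).2
    linarith
  have hT2psd : (S - mlow ^ 2 • (1 : Matrix (Fin n) (Fin n) ℝ)).PosSemidef := by
    apply hT2.posSemidef_iff_eigenvalues_nonneg.mpr
    intro i
    rw [Pi.zero_apply]
    set ℓ := hT2.eigenvalues i with hℓ
    have hmv := hT2.mulVec_eigenvectorBasis i
    have hwne : ⇑(hT2.eigenvectorBasis i) ≠ 0 := by
      have := hT2.eigenvectorBasis.orthonormal.ne_zero i
      intro h
      exact this (by ext j; exact congrFun h j)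
    have hSv : S *ᵥ ⇑(hT2.eigenvectorBasis i) = (mlow ^ 2 + ℓ) • ⇑(hT2.eigenvectorBasis i) := by
      have hexp : (S - mlow ^ 2 • (1 : Matrix (Fin n) (Fin n) ℝ)) *ᵥ ⇑(hT2.eigenvectorBasis i)
          = S *ᵥ ⇑(hT2.eigenvectorBasis i) - mlow ^ 2 • ⇑(hT2.eigenvectorBasis i) := by
        rw [Matrix.sub_mulVec, Matrix.smul_mulVec, Matrix.one_mulVec]
      rw [hexp] at hmv
      rw [add_smul]
      rw [← hmv]
      abel
    have := (key (mlow ^ 2 + ℓ) _ hwne hSv).1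
    linarith
  -- basic identities
  set p : ℝ := v ⬝ᵥ v with hp
  set q : ℝ := (M *ᵥ v) ⬝ᵥ (M *ᵥ v) with hq
  have hppos : 0 < p := by
    rcases lt_or_eq_of_le (Finset.sum_nonneg fun i _ => mul_self_nonneg (v i)
      : (0:ℝ) ≤ v ⬝ᵥ v) with h | h
    · exact h
    · exact absurd (dotProduct_self_eq_zero.mp h.symm) hv
  have hqnn : 0 ≤ q :=
    Finset.sum_nonneg fun i _ => mul_self_nonneg _
  have hvSv : v ⬝ᵥ (S *ᵥ v) = q := by
    rw [hSdef, ← Matrix.mulVec_mulVec, Matrix.dotProduct_mulVec, Matrix.vecMul_transpose]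
  have hvMv : v ⬝ᵥ (M *ᵥ v) = 0 := by
    have h1 : v ⬝ᵥ (M *ᵥ v) = (Mᵀ *ᵥ v) ⬝ᵥ v := by
      rw [Matrix.dotProduct_mulVec, Matrix.mulVec_transpose]
    rw [hM, Matrix.neg_mulVec, neg_dotProduct] at h1
    have h2 : (M *ᵥ v) ⬝ᵥ v = v ⬝ᵥ (M *ᵥ v) := dotProduct_comm _ _
    linarith
  have hAv : A *ᵥ v = v - M *ᵥ v := by
    rw [hA, Matrix.sub_mulVec, Matrix.one_mulVec]
  have hnum : v ⬝ᵥ A.mulVec v = p := by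
    show v ⬝ᵥ (A *ᵥ v) = p
    rw [hAv, dotProduct_sub, hvMv, sub_zero, hp]
  have hden : A.mulVec v ⬝ᵥ A.mulVec v = p + q := by
    show (A *ᵥ v) ⬝ᵥ (A *ᵥ v) = p + q
    rw [hAv, sub_dotProduct, dotProduct_sub, dotProduct_sub,
      hvMv, dotProduct_comm (M *ᵥ v) v, hvMv, ← hp, ← hq]
    ring
  -- Rayleigh inequalities
  have hub : q ≤ mstar ^ 2 * p := by
    have := hT1psd.dotProduct_mulVec_nonneg v
    simp only [star_trivial] at this
    rw [Matrix.sub_mulVec, Matrix.smul_mulVec, Matrix.one_mulVec,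
      dotProduct_sub, dotProduct_smul, hvSv, smul_eq_mul, ← hp] at this
    linarith
  have hlb : mlow ^ 2 * p ≤ q := by
    have := hT2psd.dotProduct_mulVec_nonneg v
    simp only [star_trivial] at this
    rw [Matrix.sub_mulVec, Matrix.smul_mulVec, Matrix.one_mulVec,
      dotProduct_sub, dotProduct_smul, hvSv, smul_eq_mul, ← hp] at this
    linarith
  rw [hnum, hden]
  have hds : (0:ℝ) < 1 + mstar ^ 2 := by positivity
  have hdl : (0:ℝ) < 1 + mlow ^ 2 := by positivity
  have hpq : 0 < p + q := by linarith
  constructor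
  · constructor
    · rw [div_le_div_iff₀ hds hpq]
      nlinarith
    · rw [div_le_div_iff₀ hpq hdl]
      nlinarith
  · intro x hx
    obtain ⟨hx1, hx2⟩ := hx
    constructor
    · exact lt_of_lt_of_le (by positivity) hx1
    · refine hx2.trans ?_
      rw [div_le_one hdl]
      nlinarith
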